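/- The image under Φ of any oriented 1-cobordism factors in 2-Cob as a cofibration followed by a fibration, both of which are again in the image of Φ: the intermediate set k = im(l_m) ∩ im(l_n) can be given signs, and the two factor cobordisms (with genus functions identically zero) satisfy the local conditions defining oriented 1-cobordisms. -/

import Mathlib

open scoped Classical

/-- The relation generating the pushout of a span `A ← k → B` of (finite) sets. -/
def PRel {k A B : Type} (f : k → A) (g : k → B) : A ⊕ B → A ⊕ B → Prop :=
  fun x y => ∃ z, x = Sum.inl (f z) ∧ y = Sum.inr (g z)

/-- The pushout of the span `A ← k → B`. -/
def Pushout {k A B : Type} (f : k → A) (g : k → B) : Type :=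
  Quot (PRel f g)

/-- Canonical map `ι_A : A → A ⊔_k B`. -/
def pInl {k A B : Type} (f : k → A) (g : k → B) (a : A) : Pushout f g :=
  Quot.mk _ (Sum.inl a)

/-- Canonical map `ι_B : B → A ⊔_k B`. -/
def pInr {k A B : Type} (f : k → A) (g : k → B) (b : B) : Pushout f g :=
  Quot.mk _ (Sum.inr b)

instance {k A B : Type} (f : k → A) (g : k → B) [Finite A] [Finite B] :
    Finite (Pushout f g) :=
  Quot.finite _

noncomputable instance {k A B : Type} (f : k → A) (g : k → B) [Fintype A] [Fintype B] :
    Fintype (Pushout f g) :=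
  Fintype.ofFinite _

/-- The genus formula of Definition 3.4:
`g(x) = 1 + Σ_{ι_A(a)=x}(g₁(a)−1) + Σ_{ι_B(b)=x}(g₂(b)−1) + #{y ∈ k : y ↦ x}`. -/
noncomputable def compGenus {k A B : Type} [Fintype k] [Fintype A] [Fintype B]
    (f : k → A) (g : k → B) (g1 : A → ℤ) (g2 : B → ℤ) (x : Pushout f g) : ℤ :=
  1 + (∑ a ∈ Finset.univ.filter (fun a => pInl f g a = x), (g1 a - 1))
    + (∑ b ∈ Finset.univ.filter (fun b => pInr f g b = x), (g2 b - 1))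
    + ((Finset.univ.filter (fun y : k => pInl f g (f y) = x)).card : ℤ)

/-- A combinatorial 2-cobordism from the finite set `m` to the finite set `n`. -/
structure Cob (m n : Type) : Type 1 where
  C : Type
  [fin : Fintype C]
  lm : m → C
  ln : n → C
  g : C → ℕ

attribute [instance] Cob.fin

/-- Composition of combinatorial 2-cobordisms via pushout of component sets
and the genus formula of Definition 3.4. -/
noncomputable def Cob.comp {m k n : Type} [Fintype k] (ψ : Cob k n) (φ : Cob m k) :
    Cob m n where
  C := Pushout φ.ln ψ.lm
  lm := fun x => pInl φ.ln ψ.lm (φ.lm x)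
  ln := fun y => pInr φ.ln ψ.lm (ψ.ln y)
  g := fun x =>
    (compGenus φ.ln ψ.lm (fun a => (φ.g a : ℤ)) (fun b => (ψ.g b : ℤ)) x).toNat

/-- Equivalence of combinatorial 2-cobordisms: a bijection of component sets
intertwining the structure maps and the genus functions. -/
def Cob.Equiv {m n : Type} (φ φ' : Cob m n) : Prop :=
  ∃ χ : φ.C ≃ φ'.C,
    (∀ x, χ (φ.lm x) = φ'.lm x) ∧ (∀ y, χ (φ.ln y) = φ'.ln y) ∧
    (∀ c, φ'.g (χ c) = φ.g c)

/-- A cofibration: `l_n` is injective and `l_n` lifts through `l_m`. -/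
def Cob.IsCofib {m n : Type} (φ : Cob m n) : Prop :=
  Function.Injective φ.ln ∧ ∃ u : n → m, ∀ y, φ.lm (u y) = φ.ln y

/-- A fibration: `l_m` is injective, `l_n` is surjective, and `g ∘ l_m = 0`. -/
def Cob.IsFib {m n : Type} (φ : Cob m n) : Prop :=
  Function.Injective φ.lm ∧ Function.Surjective φ.ln ∧ ∀ x, φ.g (φ.lm x) = 0

/-- The five local conditions of Definition 5.2.1 defining an oriented 1-cobordism
between signed finite sets (signs recorded by Boolean functions, `true` = `+`). -/
def IsOriented {m n C : Type} (sm : m → Bool) (sn : n → Bool)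
    (lm : m → C) (ln : n → C) : Prop :=
  ∀ c : C,
    (∃ a b : m, sm a = true ∧ sm b = false ∧ a ≠ b ∧
      (∀ x, lm x = c ↔ (x = a ∨ x = b)) ∧ (∀ y, ln y ≠ c)) ∨
    (∃ a b : n, sn a = true ∧ sn b = false ∧ a ≠ b ∧
      (∀ y, ln y = c ↔ (y = a ∨ y = b)) ∧ (∀ x, lm x ≠ c)) ∨
    (∃ a : m, ∃ b : n, sm a = sn b ∧
      (∀ x, lm x = c ↔ x = a) ∧ (∀ y, ln y = c ↔ y = b)) ∨
    ((∀ x, lm x ≠ c) ∧ (∀ y, ln y ≠ c))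

section Aux16

variable {m n C : Type} [Fintype m] [Fintype n] [Fintype C]
variable (lm : m → C) (ln : n → C)

/-- The intermediate set `k = im(l_m) ∩ im(l_n)`. -/
abbrev kT16 : Type := {c : C // (∃ x, lm x = c) ∧ ∃ y, ln y = c}

/-- `A = im(l_m) ∪ (C \ im(l_n))`. -/
abbrev AT16 : Type := {c : C // (∃ x, lm x = c) ∨ ¬ ∃ y, ln y = c}

/-- `B = im(l_n)`. -/
abbrev BT16 : Type := {c : C // ∃ y, ln y = c}

/-- The cofibration factor. -/
noncomputable def e16 : Cob m (kT16 lm ln) where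
  C := AT16 lm ln
  lm := fun x => ⟨lm x, Or.inl ⟨x, rfl⟩⟩
  ln := fun z => ⟨z.1, Or.inl z.2.1⟩
  g := fun _ => 0

/-- The fibration factor. -/
noncomputable def f16 : Cob (kT16 lm ln) n where
  C := BT16 ln
  lm := fun z => ⟨z.1, z.2.2⟩
  ln := fun y => ⟨ln y, ⟨y, rfl⟩⟩
  g := fun _ => 0

variable {sm : m → Bool} {sn : n → Bool}

/-- In the doubly-hit case, only the third local condition can hold. -/
lemma case3_16 (h : IsOriented sm sn lm ln) (c : C)
    (h1 : ∃ x, lm x = c) (h2 : ∃ y, ln y = c) :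
    ∃ a b, sm a = sn b ∧ (∀ x, lm x = c ↔ x = a) ∧ (∀ y, ln y = c ↔ y = b) := by
  rcases h c with ⟨a, b, _, _, _, _, hno⟩ | ⟨a, b, _, _, _, _, hno⟩ |
    ⟨a, b, hs, hm, hn⟩ | ⟨hno, _⟩
  · obtain ⟨y, hy⟩ := h2; exact absurd hy (hno y)
  · obtain ⟨x, hx⟩ := h1; exact absurd hx (hno x)
  · exact ⟨a, b, hs, hm, hn⟩
  · obtain ⟨x, hx⟩ := h1; exact absurd hx (hno x)

/-- The comparison map from the pushout back to `C`. -/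
noncomputable def chi16 : Pushout (e16 lm ln).ln (f16 lm ln).lm → C :=
  Quot.lift (Sum.elim Subtype.val Subtype.val)
    (by rintro x y ⟨z, rfl, rfl⟩; rfl)

lemma chi16_inj : Function.Injective (chi16 lm ln) := by
  intro x y
  induction x using Quot.ind with | _ x => ?_
  induction y using Quot.ind with | _ y => ?_
  rcases x with a | b <;> rcases y with a' | b' <;> intro hxy
  · exact congrArg _ (congrArg Sum.inl (Subtype.ext hxy))
  · have hv : a.1 = b'.1 := hxy
    have hB : ∃ yy, ln yy = a.1 := hv ▸ b'.2
    have hA : ∃ xx, lm xx = a.1 := a.2.resolve_right (fun hn => hn hB)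
    exact Quot.sound ⟨⟨a.1, hA, hB⟩, congrArg Sum.inl (Subtype.ext rfl),
      congrArg Sum.inr (Subtype.ext hv.symm)⟩
  · have hv : b.1 = a'.1 := hxy
    have hB : ∃ yy, ln yy = a'.1 := hv ▸ b.2
    have hA : ∃ xx, lm xx = a'.1 := a'.2.resolve_right (fun hn => hn hB)
    exact (Quot.sound ⟨⟨a'.1, hA, hB⟩, congrArg Sum.inl (Subtype.ext rfl),
      congrArg Sum.inr (Subtype.ext hv)⟩).symm
  · exact congrArg _ (congrArg Sum.inr (Subtype.ext hxy))

lemma chi16_surj : Function.Surjective (chi16 lm ln) := by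
  intro c
  by_cases hy : ∃ y, ln y = c
  · exact ⟨pInr _ _ ⟨c, hy⟩, rfl⟩
  · exact ⟨pInl _ _ ⟨c, Or.inr hy⟩, rfl⟩

omit [Fintype m] [Fintype n] [Fintype C] in
lemma filter_val_card16 {C : Type} (P : C → Prop) [Fintype {x : C // P x}] (c : C) :
    ((Finset.univ : Finset {x : C // P x}).filter (fun a => a.1 = c)).card
      = if P c then 1 else 0 := by
  classical
  split_ifs with hP
  · have hs : (Finset.univ.filter (fun a : {x : C // P x} => a.1 = c))
        = {(⟨c, hP⟩ : {x : C // P x})} := by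
      ext a
      simp only [Finset.mem_filter, Finset.mem_univ, true_and, Finset.mem_singleton]
      exact ⟨fun hv => Subtype.ext hv, fun hv => by rw [hv]⟩
    rw [hs, Finset.card_singleton]
  · rw [Finset.card_eq_zero, Finset.filter_eq_empty_iff]
    intro a _
    exact fun hv => hP (hv ▸ a.2)

end Aux16

/-- Proposition 5.4.6: the image under `Φ` of any oriented 1-cobordism
factors in 2-Cob as a cofibration followed by a fibration, both again in the image of
`Φ`: the intermediate set `k = im(l_m) ∩ im(l_n)` can be signed, both genus functions
vanish identically, and both factors satisfy the local conditions of oriented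
1-cobordisms. -/
theorem stmt_16 {m n C : Type} [Fintype m] [Fintype n] [Fintype C]
    (sm : m → Bool) (sn : n → Bool) (lm : m → C) (ln : n → C)
    (h : IsOriented sm sn lm ln) :
    ∃ (k : Type) (fk : Fintype k) (sk : k → Bool) (e : Cob m k) (f : Cob k n),
      e.IsCofib ∧ f.IsFib ∧
      (∀ a, e.g a = 0) ∧ (∀ b, f.g b = 0) ∧
      IsOriented sm sk e.lm e.ln ∧ IsOriented sk sn f.lm f.ln ∧
      Nonempty (k ≃ {c : C // (∃ x, lm x = c) ∧ ∃ y, ln y = c}) ∧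
      Cob.Equiv (@Cob.comp m k n fk f e)
        ({ C := C, lm := lm, ln := ln, g := fun _ => 0 } : Cob m n) := by
  classical
  refine ⟨kT16 lm ln, inferInstance,
    fun z => sm (Classical.choose z.2.1), e16 lm ln, f16 lm ln,
    ?_, ?_, fun _ => rfl, fun _ => rfl, ?_, ?_, ⟨Equiv.refl _⟩, ?_⟩
  · -- cofibration
    constructor
    · intro z z' hz
      have hv := congrArg Subtype.val hz
      exact Subtype.ext hv
    · refine ⟨fun z => Classical.choose z.2.1, fun z => ?_⟩
      exact Subtype.ext (Classical.choose_spec z.2.1)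
  · -- fibration
    refine ⟨fun z z' hz => Subtype.ext (congrArg Subtype.val hz :
      Subtype.val ((f16 lm ln).lm z) = Subtype.val ((f16 lm ln).lm z')), ?_, fun _ => rfl⟩
    rintro ⟨c, y, hy⟩
    exact ⟨y, Subtype.ext hy⟩
  · -- e oriented
    rintro ⟨c, hc⟩
    by_cases hB : ∃ y, ln y = c
    · -- c ∈ im ln, so c ∈ im lm by membership in A, so c ∈ k: case 3
      have hA : ∃ x, lm x = c := hc.resolve_right (fun hn => hn hB)
      obtain ⟨a, b, _, hm, hn⟩ := case3_16 lm ln h c hA hB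
      refine Or.inr (Or.inr (Or.inl ⟨a, ⟨c, hA, hB⟩, ?_, ?_, ?_⟩))
      · -- sm a = sk ⟨c, _⟩
        have key : ∀ hx : ∃ x, lm x = c, sm a = sm (Classical.choose hx) := by
          intro hx
          rw [(hm _).1 (Classical.choose_spec hx)]
        exact key _
      · intro x
        exact Subtype.ext_iff.trans (hm x)
      · intro z
        constructor
        · intro hz; exact Subtype.ext (show z.1 = c from congrArg Subtype.val hz)
        · rintro rfl; exact Subtype.ext rfl
    · -- c ∉ im ln
      rcases h c with ⟨a, b, h1, h2, h3, h4, _⟩ | ⟨a, b, _, _, _, hn, _⟩ |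
        ⟨a, b, _, hm, hn⟩ | ⟨hno, _⟩
      · refine Or.inl ⟨a, b, h1, h2, h3, ?_, ?_⟩
        · intro x; exact Subtype.ext_iff.trans (h4 x)
        · intro z hz
          exact hB ((show z.1 = c from congrArg Subtype.val hz) ▸ z.2.2)
      · exact absurd ((hn a).2 (Or.inl rfl)) (fun ha => hB ⟨a, ha⟩)
      · exact absurd ((hn b).2 rfl) (fun hb => hB ⟨b, hb⟩)
      · refine Or.inr (Or.inr (Or.inr ⟨?_, ?_⟩))
        · intro x hx; exact hno x (congrArg Subtype.val hx)
        · intro z hz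
          exact hB ((show z.1 = c from congrArg Subtype.val hz) ▸ z.2.2)
  · -- f oriented
    rintro ⟨c, hc⟩
    by_cases hA : ∃ x, lm x = c
    · obtain ⟨a, b, hs, hm, hn⟩ := case3_16 lm ln h c hA hc
      refine Or.inr (Or.inr (Or.inl ⟨⟨c, hA, hc⟩, b, ?_, ?_, ?_⟩))
      · have key : ∀ hx : ∃ x, lm x = c, sm (Classical.choose hx) = sn b := by
          intro hx
          rw [(hm _).1 (Classical.choose_spec hx)]
          exact hs
        exact key _
      · intro z
        constructor
        · intro hz; exact Subtype.ext (show z.1 = c from congrArg Subtype.val hz)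
        · rintro rfl; exact Subtype.ext rfl
      · intro y; exact Subtype.ext_iff.trans (hn y)
    · rcases h c with ⟨a, b, _, _, _, _, hno⟩ | ⟨a, b, h1, h2, h3, h4, _⟩ |
        ⟨a, b, _, hm, _⟩ | ⟨_, hno⟩
      · obtain ⟨y, hy⟩ := hc; exact absurd hy (hno y)
      · refine Or.inr (Or.inl ⟨a, b, h1, h2, h3, ?_, ?_⟩)
        · intro y; exact Subtype.ext_iff.trans (h4 y)
        · intro z hz; exact hA ((show z.1 = c from congrArg Subtype.val hz) ▸ z.2.1)
      · exact absurd ⟨a, (hm a).2 rfl⟩ hA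
      · obtain ⟨y, hy⟩ := hc; exact absurd hy (hno y)
  · -- composition equivalence
    have hbij : Function.Bijective (chi16 lm ln) := ⟨chi16_inj lm ln, chi16_surj lm ln⟩
    refine ⟨Equiv.ofBijective _ hbij, fun x => rfl, fun y => rfl, ?_⟩
    intro x
    obtain ⟨c, hcx⟩ : ∃ c, chi16 lm ln x = c := ⟨_, rfl⟩
    have hinl : ∀ a : (e16 lm ln).C, pInl (e16 lm ln).ln (f16 lm ln).lm a = x ↔ a.1 = c := by
      intro a
      constructor
      · intro hax; rw [← hcx, ← hax]; rfl
      · intro hac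
        apply chi16_inj lm ln
        rw [hcx]; exact hac
    have hinr : ∀ b : (f16 lm ln).C, pInr (e16 lm ln).ln (f16 lm ln).lm b = x ↔ b.1 = c := by
      intro b
      constructor
      · intro hbx; rw [← hcx, ← hbx]; rfl
      · intro hbc
        apply chi16_inj lm ln
        rw [hcx]; exact hbc
    have hink : ∀ z : kT16 lm ln,
        pInl (e16 lm ln).ln (f16 lm ln).lm ((e16 lm ln).ln z) = x ↔ z.1 = c := by
      intro z; rw [hinl]; rfl
    show (0 : ℕ) = (compGenus (e16 lm ln).ln (f16 lm ln).lm
      (fun a => ((e16 lm ln).g a : ℤ)) (fun b => ((f16 lm ln).g b : ℤ)) x).toNat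
    unfold compGenus
    have e1 : (Finset.univ.filter
        (fun a : (e16 lm ln).C => pInl (e16 lm ln).ln (f16 lm ln).lm a = x))
        = Finset.univ.filter (fun a : (e16 lm ln).C => a.1 = c) := by
      ext a; simp only [Finset.mem_filter, Finset.mem_univ, true_and]; exact hinl a
    have e2 : (Finset.univ.filter
        (fun b : (f16 lm ln).C => pInr (e16 lm ln).ln (f16 lm ln).lm b = x))
        = Finset.univ.filter (fun b : (f16 lm ln).C => b.1 = c) := by
      ext b; simp only [Finset.mem_filter, Finset.mem_univ, true_and]; exact hinr b
    have e3 : (Finset.univ.filter (fun z : kT16 lm ln =>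
        pInl (e16 lm ln).ln (f16 lm ln).lm ((e16 lm ln).ln z) = x))
        = Finset.univ.filter (fun z : kT16 lm ln => z.1 = c) := by
      ext z; simp only [Finset.mem_filter, Finset.mem_univ, true_and]; exact hink z
    rw [e1, e2, e3]
    have s1 : ∀ a : (e16 lm ln).C, (((e16 lm ln).g a : ℤ) - 1) = -1 := by
      intro a; simp [e16]
    have s2 : ∀ b : (f16 lm ln).C, (((f16 lm ln).g b : ℤ) - 1) = -1 := by
      intro b; simp [f16]
    rw [Finset.sum_congr rfl (fun a _ => s1 a), Finset.sum_congr rfl (fun b _ => s2 b),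
      Finset.sum_const, Finset.sum_const]
    have c1 : ((Finset.univ.filter (fun a : (e16 lm ln).C => a.1 = c))).card
        = if ((∃ x, lm x = c) ∨ ¬ ∃ y, ln y = c) then 1 else 0 := by
      convert filter_val_card16 (P := fun c => (∃ x, lm x = c) ∨ ¬ ∃ y, ln y = c) c using 2 <;> rfl
    have c2 : ((Finset.univ.filter (fun b : (f16 lm ln).C => b.1 = c))).card
        = if (∃ y, ln y = c) then 1 else 0 := by
      convert filter_val_card16 (P := fun c => ∃ y, ln y = c) c using 2 <;> rfl
    have c3 : ((Finset.univ.filter (fun z : kT16 lm ln => z.1 = c))).card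
        = if ((∃ x, lm x = c) ∧ ∃ y, ln y = c) then 1 else 0 := by
      convert filter_val_card16 _ c using 2
    rw [c1, c2, c3]
    by_cases hm' : ∃ x, lm x = c <;> by_cases hn' : ∃ y, ln y = c <;>
      simp [hm', hn']
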